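/- Let N be a finitely generated commutative monoid such that for all x, y ∈ N, x·y = x implies y = 1. Then there exists a homomorphism δ : N → ℕ to the additive monoid of natural numbers (i.e. δ(x·y) = δ(x) + δ(y) and δ(1) = 0) such that for every x ∈ N, δ(x) = 0 if and only if x is invertible in N. -/

import Mathlib

private theorem farkas {V : Type*} [AddCommGroup V] [Module ℚ V] :
    ∀ {k : ℕ} (a : Fin k → V) (b : V),
      (∃ μ : Fin k → ℚ, (∀ i, 0 ≤ μ i) ∧ ∑ i, μ i • a i = b) ∨
      (∃ f : V →ₗ[ℚ] ℚ, (∀ i, 0 ≤ f (a i)) ∧ f b < 0) := by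
  intro k
  induction k with
  | zero =>
    intro a b
    by_cases hb : b = 0
    · exact Or.inl ⟨0, fun i => le_refl _, by simp [hb]⟩
    · right
      obtain ⟨f, hf⟩ : ∃ f : Module.Dual ℚ V, f b ≠ 0 := by
        by_contra h
        push_neg at h
        exact hb ((Module.forall_dual_apply_eq_zero_iff ℚ b).mp h)
      rcases lt_or_gt_of_ne hf with h | h
      · exact ⟨f, fun i => i.elim0, h⟩
      · exact ⟨-f, fun i => i.elim0, by simpa using h⟩
  | succ k ih =>
    intro a b
    rcases ih (fun i => a i.castSucc) b with ⟨μ, hμ, hsum⟩ | ⟨f, hf, hfb⟩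
    · left
      refine ⟨Fin.snoc μ 0, ?_, ?_⟩
      · intro i
        induction i using Fin.lastCases with
        | last => simp
        | cast i => simpa using hμ i
      · rw [Fin.sum_univ_castSucc]
        simp [Fin.snoc, hsum]
    · by_cases hlast : 0 ≤ f (a (Fin.last k))
      · right
        refine ⟨f, ?_, hfb⟩
        intro i
        induction i using Fin.lastCases with
        | last => exact hlast
        | cast i => exact hf i
      · push_neg at hlast
        set c := f (a (Fin.last k)) with hc
        have hcne : c ≠ 0 := ne_of_lt hlast
        set a' : Fin k → V := fun i => a i.castSucc - (f (a i.castSucc) / c) • a (Fin.last k) with ha'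
        set b' : V := b - (f b / c) • a (Fin.last k) with hb'
        rcases ih a' b' with ⟨μ, hμ, hsum⟩ | ⟨g, hg, hgb⟩
        · left
          set ν : ℚ := (f b - ∑ i, μ i * f (a i.castSucc)) / c with hν
          have hνpos : 0 ≤ ν := by
            apply div_nonneg_iff.mpr
            right
            have : 0 ≤ ∑ i, μ i * f (a i.castSucc) :=
              Finset.sum_nonneg fun i _ => mul_nonneg (hμ i) (hf i)
            constructor <;> linarith
          refine ⟨Fin.snoc μ ν, ?_, ?_⟩
          · intro i
            induction i using Fin.lastCases with
            | last => simpa using hνpos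
            | cast i => simpa using hμ i
          · rw [Fin.sum_univ_castSucc]
            simp only [Fin.snoc_castSucc, Fin.snoc_last]
            have expand : ∑ i, μ i • a' i
                = ∑ i, μ i • a i.castSucc - (∑ i, μ i * f (a i.castSucc) / c) • a (Fin.last k) := by
              rw [ha']
              simp only [smul_sub, Finset.sum_sub_distrib, smul_smul]
              rw [← Finset.sum_smul]
              have : (∑ i, μ i * (f (a i.castSucc) / c)) = ∑ i, μ i * f (a i.castSucc) / c :=
                Finset.sum_congr rfl fun i _ => by ring
              rw [this]
            rw [expand, hb'] at hsum
            have : ∑ i, μ i • a i.castSucc =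
                b - (f b / c) • a (Fin.last k) + (∑ i, μ i * f (a i.castSucc) / c) • a (Fin.last k) := by
              linear_combination (norm := module) hsum
            rw [this, hν]
            match_scalars <;> (try rw [← Finset.sum_div]) <;> ring
        · right
          refine ⟨g - (g (a (Fin.last k)) / c) • f, ?_, ?_⟩
          · intro i
            induction i using Fin.lastCases with
            | last =>
              simp only [LinearMap.sub_apply, LinearMap.smul_apply, smul_eq_mul]
              rw [← hc]
              field_simp
              simp
            | cast i =>
              have := hg i
              rw [ha'] at this
              simp only [map_sub, map_smul, smul_eq_mul] at this
              simp only [LinearMap.sub_apply, LinearMap.smul_apply, smul_eq_mul]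
              rw [show g (a (Fin.last k)) / c * f (a i.castSucc)
                  = f (a i.castSucc) / c * g (a (Fin.last k)) from by ring]
              linarith [this]
          · have := hgb
            rw [hb'] at this
            simp only [map_sub, map_smul, smul_eq_mul] at this
            simp only [LinearMap.sub_apply, LinearMap.smul_apply, smul_eq_mul]
            rw [show g (a (Fin.last k)) / c * f b = f b / c * g (a (Fin.last k)) from by ring]
            linarith [this]

private theorem gordan {V : Type*} [AddCommGroup V] [Module ℚ V] {ι : Type*} [Fintype ι]
    (v : ι → V)
    (h : ∀ lam : ι → ℚ, (∀ i, 0 ≤ lam i) → ∑ i, lam i • v i = 0 → ∀ i, lam i = 0) :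
    ∃ f : V →ₗ[ℚ] ℚ, ∀ i, 0 < f (v i) := by
  classical
  obtain ⟨e⟩ : Nonempty (ι ≃ Fin (Fintype.card ι)) := ⟨Fintype.equivFin ι⟩
  set va : Fin (Fintype.card ι) → V × ℚ := fun j => (v (e.symm j), -1) with hva
  rcases farkas va ((0 : V), (-1 : ℚ)) with ⟨μ, hμ, hsum⟩ | ⟨f, hf, hfb⟩
  · exfalso
    have h1 : ∑ j, μ j • v (e.symm j) = 0 ∧ ∑ j, μ j * (-1) = -1 := by
      constructor
      · have := congrArg Prod.fst hsum
        simpa [Finset.sum_apply, Prod.fst_sum] using this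
      · have := congrArg Prod.snd hsum
        simpa [Prod.snd_sum, hva] using this
    set lam : ι → ℚ := fun i => μ (e i) with hlam
    have hz : ∀ i, lam i = 0 := by
      apply h lam (fun i => hμ (e i))
      rw [← Equiv.sum_comp e.symm (fun i => lam i • v i)]
      simpa [hlam] using h1.1
    have : ∑ j, μ j * (-1) = 0 := by
      apply Finset.sum_eq_zero
      intro j _
      have := hz (e.symm j)
      simp [hlam] at this
      simp [this]
    rw [this] at h1
    exact absurd h1.2 (by norm_num)
  · set c : ℚ := f ((0:V), (1:ℚ)) with hc
    have hcpos : 0 < c := by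
      have : f ((0:V), (-1:ℚ)) = -c := by
        rw [hc, ← map_neg]
        norm_num
      rw [this] at hfb
      linarith
    refine ⟨f.comp (LinearMap.inl ℚ V ℚ), ?_⟩
    intro i
    have hsplit : f (va (e i)) = f ((v i, (0:ℚ))) - c := by
      have : va (e i) = ((v i, (0:ℚ)) + ((0:V), (-1:ℚ))) := by
        simp [hva, Prod.ext_iff]
      rw [this, map_add]
      have : f ((0:V), (-1:ℚ)) = -c := by
        rw [hc, ← map_neg]; norm_num
      rw [this]; ring
    have := hf (e i)
    rw [hsplit] at this
    simp only [LinearMap.coe_comp, Function.comp_apply, LinearMap.inl_apply]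
    linarith

set_option maxHeartbeats 2000000 in
private theorem exists_grading_aux {N : Type*} [CommMonoid N]
    (hfg : ∃ S : Finset N, Submonoid.closure (S : Set N) = ⊤)
    (hsep : ∀ x y : N, x * y = x → y = 1) :
    ∃ δ : N → ℕ, (∀ x y : N, δ (x * y) = δ x + δ y) ∧ δ 1 = 0 ∧
      ∀ x : N, δ x = 0 ↔ IsUnit x := by
  classical
  obtain ⟨S, hS⟩ := hfg
  set ι := {x : N // x ∈ S} with hι
  set P : (ι → ℕ) → N := fun a => ∏ i : ι, (i : N) ^ a i with hP
  have hP0 : P 0 = 1 := by simp [hP]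
  have hPadd : ∀ a b : ι → ℕ, P (a + b) = P a * P b := by
    intro a b
    simp [hP, pow_add, Finset.prod_mul_distrib]
  have hPsingle : ∀ j : ι, P (Pi.single j 1) = (j : N) := by
    intro j
    have h0 : P (Pi.single j 1) = ∏ i : ι, (i : N) ^ (Pi.single j (1:ℕ)) i := rfl
    rw [h0, Finset.prod_eq_single j]
    · simp
    · intro b _ hb
      simp [Pi.single_apply, hb]
    · simp
  -- surjectivity
  have hsurj : ∀ x : N, ∃ a : ι → ℕ, P a = x := by
    intro x
    have hx : x ∈ Submonoid.closure (S : Set N) := by rw [hS]; trivial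
    induction hx using Submonoid.closure_induction with
    | mem s hs =>
      exact ⟨Pi.single ⟨s, hs⟩ 1, hPsingle ⟨s, hs⟩⟩
    | one => exact ⟨0, hP0⟩
    | mul x y _ _ hx hy =>
      obtain ⟨a, ha⟩ := hx
      obtain ⟨b, hb⟩ := hy
      exact ⟨a + b, by rw [hPadd, ha, hb]⟩
  set rep : N → (ι → ℕ) := fun x => (hsurj x).choose with hrepdef
  have hrep : ∀ x : N, P (rep x) = x := fun x => (hsurj x).choose_spec
  set E : (ι → ℕ) → (ι → ℚ) := fun a i => (a i : ℚ) with hE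
  -- the generating set for W
  set Wset : Set (ι → ℚ) :=
    {v | ∃ a b : ι → ℕ, P a = P b ∧ v = E a - E b} ∪
    {v | ∃ j : ι, IsUnit (j : N) ∧ v = Pi.single j 1} with hWset
  -- the subgroup C
  set C : Set (ι → ℚ) := {v | ∃ a b : ι → ℕ, ∃ t u₁ u₂ : N, IsUnit u₁ ∧ IsUnit u₂ ∧
    P a * u₁ * t = P b * u₂ * t ∧ v = E a - E b} with hC
  have hCzero : (0 : ι → ℚ) ∈ C := ⟨0, 0, 1, 1, 1, isUnit_one, isUnit_one, rfl, by simp⟩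
  have hCadd : ∀ v v', v ∈ C → v' ∈ C → v + v' ∈ C := by
    rintro v v' ⟨a, b, t, u₁, u₂, hu₁, hu₂, heq, rfl⟩ ⟨a', b', t', u₁', u₂', hu₁', hu₂', heq', rfl⟩
    refine ⟨a + a', b + b', t * t', u₁ * u₁', u₂ * u₂', hu₁.mul hu₁', hu₂.mul hu₂', ?_, ?_⟩
    · rw [hPadd, hPadd]
      calc P a * P a' * (u₁ * u₁') * (t * t') = (P a * u₁ * t) * (P a' * u₁' * t') := by ac_rfl
        _ = (P b * u₂ * t) * (P b' * u₂' * t') := by rw [heq, heq']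
        _ = P b * P b' * (u₂ * u₂') * (t * t') := by ac_rfl
    · funext i
      simp [hE]
      ring
  have hCneg : ∀ v, v ∈ C → -v ∈ C := by
    rintro v ⟨a, b, t, u₁, u₂, hu₁, hu₂, heq, rfl⟩
    exact ⟨b, a, t, u₂, u₁, hu₂, hu₁, heq.symm, by ring⟩
  set CG : AddSubgroup (ι → ℚ) :=
    { carrier := C, zero_mem' := hCzero, add_mem' := fun h1 h2 => hCadd _ _ h1 h2,
      neg_mem' := fun h => hCneg _ h } with hCG
  have hWsetC : Wset ⊆ C := by
    rintro v (⟨a, b, hab, rfl⟩ | ⟨j, hj, rfl⟩)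
    · exact ⟨a, b, 1, 1, 1, isUnit_one, isUnit_one, by rw [hab], rfl⟩
    · refine ⟨Pi.single j 1, 0, 1, 1, (j : N), isUnit_one, hj, ?_, ?_⟩
      · simp [hPsingle, hP0, mul_comm]
      · funext i
        simp [hE, Pi.single_apply]
  set W : Submodule ℚ (ι → ℚ) := Submodule.span ℚ Wset with hW
  have hCnsmul : ∀ (n : ℕ) (v : ι → ℚ), v ∈ C → (n : ℚ) • v ∈ C := by
    intro n
    induction n with
    | zero => intro v _; simpa using hCzero
    | succ n ih =>
      intro v hv
      have : ((n + 1 : ℕ) : ℚ) • v = (n : ℚ) • v + v := by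
        rw [Nat.cast_add, Nat.cast_one, add_smul, one_smul]
      rw [this]
      exact hCadd _ _ (ih v hv) hv
  have hCzsmul : ∀ (z : ℤ) (v : ι → ℚ), v ∈ C → (z : ℚ) • v ∈ C := by
    intro z v hv
    obtain ⟨n, h | h⟩ := z.eq_nat_or_neg
    · rw [h]; push_cast; exact hCnsmul n v hv
    · rw [h]
      have : ((-(n:ℤ) : ℤ) : ℚ) • v = (n : ℚ) • (-v) := by
        push_cast
        rw [neg_smul, smul_neg]
      rw [this]
      exact hCnsmul n _ (hCneg v hv)
  -- scaling lemma
  have hWC : ∀ v ∈ W, ∃ M : ℕ, M ≠ 0 ∧ (M : ℚ) • v ∈ C := by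
    intro v hv
    induction hv using Submodule.span_induction with
    | mem x hx => exact ⟨1, one_ne_zero, by simpa using hWsetC hx⟩
    | zero => exact ⟨1, one_ne_zero, by simpa using hCzero⟩
    | add x y _ _ hx hy =>
      obtain ⟨M₁, hM₁, hx⟩ := hx
      obtain ⟨M₂, hM₂, hy⟩ := hy
      refine ⟨M₁ * M₂, mul_ne_zero hM₁ hM₂, ?_⟩
      have heq : ((M₁ * M₂ : ℕ) : ℚ) • (x + y)
          = (M₂ : ℚ) • ((M₁ : ℚ) • x) + (M₁ : ℚ) • ((M₂ : ℚ) • y) := by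
        rw [smul_add, smul_smul, smul_smul]
        push_cast
        ring_nf
      rw [heq]
      exact hCadd _ _ (hCnsmul M₂ _ hx) (hCnsmul M₁ _ hy)
    | smul q x _ hx =>
      obtain ⟨M, hM, hx⟩ := hx
      refine ⟨q.den * M, mul_ne_zero q.den_nz hM, ?_⟩
      have heq : ((q.den * M : ℕ) : ℚ) • (q • x) = (q.num : ℚ) • ((M : ℚ) • x) := by
        rw [smul_smul, smul_smul]
        congr 1
        push_cast
        linear_combination (M : ℚ) * Rat.mul_den_eq_num q
      rw [heq]
      exact hCzsmul q.num _ hx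
  -- the quotient space and the vectors
  set κ := {i : ι // ¬ IsUnit (i : N)} with hκ
  set vv : κ → ((ι → ℚ) ⧸ W) := fun i => Submodule.Quotient.mk (Pi.single i.val 1) with hvv
  -- pointedness
  have hpoint : ∀ lam : κ → ℚ, (∀ i, 0 ≤ lam i) → ∑ i, lam i • vv i = 0 → ∀ i, lam i = 0 := by
    intro lam hlam hsum
    set q : ι → ℚ := ∑ i : κ, lam i • (Pi.single i.val (1:ℚ) : ι → ℚ) with hq
    have hqW : q ∈ W := by
      rw [← Submodule.Quotient.mk_eq_zero W, ← hsum]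
      have hmk : Submodule.Quotient.mk (p := W) q = W.mkQ q := rfl
      rw [hmk, hq, map_sum]
      apply Finset.sum_congr rfl
      intro i _
      rw [map_smul]
      rfl
    have hqval : ∀ i : κ, q i.val = lam i := by
      intro i
      rw [hq]
      rw [Finset.sum_apply]
      rw [Finset.sum_eq_single i]
      · simp
      · intro j _ hj
        have : j.val ≠ i.val := fun h => hj (Subtype.ext h)
        simp [Pi.single_apply, this]
      · simp
    have hqnonneg : ∀ j : ι, 0 ≤ q j := by
      intro j
      rw [hq, Finset.sum_apply]
      apply Finset.sum_nonneg
      intro i _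
      simp only [Pi.smul_apply, Pi.single_apply, smul_eq_mul]
      by_cases h : j = i.val <;> simp [h, hlam i]
    obtain ⟨M, hM, hMC⟩ := hWC q hqW
    obtain ⟨a, b, t, u₁, u₂, hu₁, hu₂, heq, hv⟩ := hMC
    have hab : ∀ j : ι, (b j : ℚ) ≤ (a j : ℚ) := by
      intro j
      have h1 : (a j : ℚ) - (b j : ℚ) = (M : ℚ) * q j := by
        have := congrFun hv j
        simpa [hE] using this.symm
      nlinarith [hqnonneg j, Nat.cast_nonneg (α := ℚ) M]
    have hba : ∀ j : ι, b j ≤ a j := fun j => by exact_mod_cast hab j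
    set m : ι → ℕ := fun j => a j - b j with hm
    have ham : a = b + m := by
      funext j
      have := hba j
      simp only [hm, Pi.add_apply]
      omega
    have hmq : ∀ j : ι, (m j : ℚ) = (M : ℚ) * q j := by
      intro j
      have h1 : (a j : ℚ) - (b j : ℚ) = (M : ℚ) * q j := by
        have := congrFun hv j
        simpa [hE] using this.symm
      have : (m j : ℚ) = (a j : ℚ) - (b j : ℚ) := by
        have := hba j
        simp only [hm]
        push_cast [this]
        ring
      rw [this, h1]
    -- derive that P m is a unit
    obtain ⟨winv, hwinv⟩ := hu₂.exists_right_inv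
    have hPa : P a = P b * P m := by rw [ham, hPadd]
    have key : (P b * t) * (P m * u₁ * winv) = P b * t := by
      calc (P b * t) * (P m * u₁ * winv) = (P a * u₁ * t) * winv := by rw [hPa]; ac_rfl
        _ = (P b * u₂ * t) * winv := by rw [heq]
        _ = (u₂ * winv) * (P b * t) := by ac_rfl
        _ = P b * t := by rw [hwinv, one_mul]
    have hPmunit : IsUnit (P m) := by
      have h1 : P m * u₁ * winv = 1 := hsep _ _ key
      exact IsUnit.of_mul_eq_one (a := P m) (u₁ * winv) (by rw [← mul_assoc]; exact h1)
    -- conclude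
    intro i
    by_contra hne
    have hpos : 0 < lam i := lt_of_le_of_ne (hlam i) (Ne.symm hne)
    have hmipos : m i.val ≠ 0 := by
      intro h0
      have : (m i.val : ℚ) = 0 := by rw [h0]; simp
      rw [hmq i.val, hqval i] at this
      have hMpos : (0:ℚ) < (M:ℚ) := by exact_mod_cast Nat.pos_of_ne_zero hM
      nlinarith
    have hfact : IsUnit ((i.val : N) ^ m i.val) := by
      have hsplit : (i.val : N) ^ m i.val * ∏ j ∈ Finset.univ.erase i.val, (j : N) ^ m j
          = P m := Finset.mul_prod_erase Finset.univ (fun j : ι => (j : N) ^ m j)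
            (Finset.mem_univ i.val)
      exact isUnit_of_mul_isUnit_left (by rw [hsplit]; exact hPmunit)
    exact i.2 ((isUnit_pow_iff hmipos).mp hfact)
  -- apply Gordan
  obtain ⟨f, hf⟩ := gordan vv hpoint
  set g : (ι → ℚ) →ₗ[ℚ] ℚ := f.comp W.mkQ with hg
  set r : ι → ℚ := fun i => g (Pi.single i 1) with hr
  have hrpos : ∀ i : ι, ¬ IsUnit (i : N) → 0 < r i := by
    intro i hi
    have := hf ⟨i, hi⟩
    simpa [hvv, hr, hg, Submodule.mkQ_apply] using this
  have hrunit : ∀ i : ι, IsUnit (i : N) → r i = 0 := by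
    intro i hi
    have hmem : (Pi.single i (1:ℚ) : ι → ℚ) ∈ W :=
      Submodule.subset_span (Or.inr ⟨i, hi, rfl⟩)
    have : W.mkQ (Pi.single i (1:ℚ)) = 0 := by
      rw [Submodule.mkQ_apply, Submodule.Quotient.mk_eq_zero]
      exact hmem
    simp only [hr, hg, LinearMap.comp_apply]
    rw [this, map_zero]
  have hr0 : ∀ i : ι, 0 ≤ r i := by
    intro i
    by_cases hi : IsUnit (i : N)
    · rw [hrunit i hi]
    · exact le_of_lt (hrpos i hi)
  have hrel : ∀ a b : ι → ℕ, P a = P b → g (E a) = g (E b) := by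
    intro a b hab
    have hmem : E a - E b ∈ W := Submodule.subset_span (Or.inl ⟨a, b, hab, rfl⟩)
    have h0 : g (E a - E b) = 0 := by
      simp only [hg, LinearMap.comp_apply]
      rw [show W.mkQ (E a - E b) = 0 by
        rw [Submodule.mkQ_apply, Submodule.Quotient.mk_eq_zero]; exact hmem]
      exact map_zero f
    rw [map_sub] at h0
    linarith
  have hgE : ∀ a : ι → ℕ, g (E a) = ∑ i : ι, (a i : ℚ) * r i := by
    intro a
    have hEa : E a = ∑ i : ι, (a i : ℚ) • (Pi.single i (1:ℚ) : ι → ℚ) := by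
      funext j
      rw [Finset.sum_apply]
      rw [Finset.sum_eq_single j]
      · simp [hE]
      · intro i _ hi
        simp [Pi.single_apply, Ne.symm hi]
      · simp
    rw [hEa, map_sum]
    apply Finset.sum_congr rfl
    intro i _
    rw [map_smul]
    simp [hr]
  -- common denominator
  set M : ℕ := ∏ i : ι, (r i).den with hM
  have hMne : M ≠ 0 := by
    rw [hM]
    exact Finset.prod_ne_zero_iff.mpr (fun i _ => (r i).den_nz)
  have hMpos : (0:ℚ) < (M:ℚ) := by exact_mod_cast Nat.pos_of_ne_zero hMne
  have hwex : ∀ i : ι, ∃ n : ℕ, (n : ℚ) = (M : ℚ) * r i := by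
    intro i
    obtain ⟨k, hk⟩ : (r i).den ∣ M := Finset.dvd_prod_of_mem _ (Finset.mem_univ i)
    refine ⟨k * (r i).num.toNat, ?_⟩
    have hnum : ((r i).num.toNat : ℤ) = (r i).num :=
      Int.toNat_of_nonneg (Rat.num_nonneg.mpr (hr0 i))
    have h2 : ((r i).num.toNat : ℚ) = ((r i).num : ℚ) := by exact_mod_cast hnum
    rw [Nat.cast_mul, h2, ← Rat.mul_den_eq_num, hk]
    push_cast
    ring
  set w : ι → ℕ := fun i => (hwex i).choose with hwdef
  have hw : ∀ i : ι, (w i : ℚ) = (M : ℚ) * r i := fun i => (hwex i).choose_spec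
  have hwunit : ∀ i : ι, IsUnit (i : N) → w i = 0 := by
    intro i hi
    have : (w i : ℚ) = 0 := by rw [hw i, hrunit i hi, mul_zero]
    exact_mod_cast this
  have hwpos : ∀ i : ι, ¬ IsUnit (i : N) → w i ≠ 0 := by
    intro i hi h0
    have h1 : (w i : ℚ) = 0 := by exact_mod_cast h0
    rw [hw i] at h1
    have := hrpos i hi
    nlinarith
  set D : (ι → ℕ) → ℕ := fun a => ∑ i : ι, w i * a i with hD
  have hDcast : ∀ a : ι → ℕ, (D a : ℚ) = (M : ℚ) * g (E a) := by
    intro a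
    rw [hD]
    push_cast
    rw [hgE, Finset.mul_sum]
    apply Finset.sum_congr rfl
    intro i _
    rw [hw i]
    ring
  have hDwd : ∀ a b : ι → ℕ, P a = P b → D a = D b := by
    intro a b hab
    have : (D a : ℚ) = (D b : ℚ) := by
      rw [hDcast, hDcast, hrel a b hab]
    exact_mod_cast this
  have hDadd : ∀ a b : ι → ℕ, D (a + b) = D a + D b := by
    intro a b
    rw [hD]
    simp only [Pi.add_apply, Nat.mul_add]
    rw [Finset.sum_add_distrib]
  have hD0 : D 0 = 0 := by
    rw [hD]
    simp
  refine ⟨fun x => D (rep x), ?_, ?_, ?_⟩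
  · intro x y
    show D (rep (x * y)) = D (rep x) + D (rep y)
    have h1 : P (rep x + rep y) = P (rep (x * y)) := by
      rw [hPadd, hrep, hrep, hrep]
    rw [← hDwd _ _ h1, hDadd]
  · show D (rep 1) = 0
    have h1 : P (rep 1) = P 0 := by rw [hrep, hP0]
    rw [hDwd _ _ h1, hD0]
  · intro x
    constructor
    · intro h0
      replace h0 : D (rep x) = 0 := h0
      rw [hD] at h0
      simp only at h0
      have himp : IsUnit (P (rep x)) → IsUnit x := by rw [hrep]; exact id
      apply himp
      rw [show P (rep x) = ∏ i : ι, (i : N) ^ rep x i from rfl]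
      apply Finset.prod_induction _ IsUnit (fun a b ha hb => ha.mul hb) isUnit_one
      intro i _
      have hterm : w i * rep x i = 0 :=
        (Finset.sum_eq_zero_iff).mp h0 i (Finset.mem_univ i)
      by_cases hai : rep x i = 0
      · rw [hai, pow_zero]; exact isUnit_one
      · have hwi : w i = 0 := by
          rcases Nat.mul_eq_zero.mp hterm with h | h
          · exact h
          · exact absurd h hai
        by_cases hi : IsUnit (i : N)
        · exact hi.pow _
        · exact absurd hwi (hwpos i hi)
    · intro hx
      show D (rep x) = 0
      obtain ⟨y, hy⟩ := hx.exists_right_inv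
      have h1 : P (rep x + rep y) = P 0 := by
        rw [hPadd, hrep, hrep, hP0, hy]
      have h2 : D (rep x + rep y) = 0 := by
        rw [hDwd _ _ h1, hD0]
      rw [hDadd] at h2
      omega

/-- Let `N` be a finitely generated commutative monoid such that
`x * y = x` implies `y = 1`. Then there is a grading `δ : N → ℕ` (additive, sending `1` to
`0`) such that `δ x = 0` iff `x` is invertible. -/
theorem exists_grading {N : Type*} [CommMonoid N]
    (hfg : ∃ S : Finset N, Submonoid.closure (S : Set N) = ⊤)
    (hsep : ∀ x y : N, x * y = x → y = 1) :
    ∃ δ : N → ℕ, (∀ x y : N, δ (x * y) = δ x + δ y) ∧ δ 1 = 0 ∧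
      ∀ x : N, δ x = 0 ↔ IsUnit x := by
  exact exists_grading_aux hfg hsep
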